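/- With S as above (Robin–Dirichlet Laplacian on (0,ε) with Robin parameter −α at 0), the L²-normalized eigenfunction f associated with the first eigenvalue satisfies |f(0)|² = 2α + O(1) as α → +∞. -/

import Mathlib

set_option maxHeartbeats 1000000

open Real

/- ## Auxiliary lemmas -/

lemma lin_ode (c : ℝ) (g : ℝ → ℝ) (hg : Differentiable ℝ g)
    (h : ∀ x, deriv g x = c * g x) : ∀ x, g x = g 0 * Real.exp (c * x) := by
  have hu : ∀ x, HasDerivAt (fun x => g x * Real.exp (-(c * x))) 0 x := by
    intro x
    have h1 : HasDerivAt g (c * g x) x := by rw [← h x]; exact (hg x).hasDerivAt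
    have h2 : HasDerivAt (fun x => Real.exp (-(c * x)))
        (Real.exp (-(c * x)) * (-c)) x := by
      have := ((hasDerivAt_id x).const_mul (-c)).exp
      simpa [neg_mul, mul_comm] using this
    have := h1.mul h2
    refine this.congr_deriv ?_
    ring
  have hconst : ∀ x, g x * Real.exp (-(c * x)) = g 0 * Real.exp (-(c * 0)) := by
    intro x
    exact is_const_of_deriv_eq_zero (fun y => (hu y).differentiableAt)
      (fun y => (hu y).deriv) x 0
  intro x
  have := hconst x
  simp only [mul_zero, neg_zero, Real.exp_zero, mul_one] at this
  have hne : Real.exp (-(c * x)) ≠ 0 := (Real.exp_pos _).ne'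
  have : g x = g 0 / Real.exp (-(c * x)) := by field_simp at this ⊢; linarith
  rw [this, Real.exp_neg]
  field_simp

lemma deriv_diffble {f : ℝ → ℝ} (hf : ContDiff ℝ 2 f) : Differentiable ℝ (deriv f) := by
  have h2 : ContDiff ℝ (1 + 1 : ℕ) f := by norm_num; exact hf
  rw [show ((1 + 1 : ℕ) : WithTop ℕ∞) = (1 : WithTop ℕ∞) + 1 by norm_num,
    contDiff_succ_iff_deriv] at h2
  exact h2.2.2.differentiable one_ne_zero

lemma second_ode (c : ℝ) (hc : c ≠ 0) (f : ℝ → ℝ) (hf : ContDiff ℝ 2 f)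
    (hode : ∀ x, deriv (deriv f) x = c ^ 2 * f x) :
    ∀ x, f x = (deriv f 0 + c * f 0) / (2 * c) * Real.exp (c * x)
      + (c * f 0 - deriv f 0) / (2 * c) * Real.exp (-(c * x)) := by
  have hf1 : Differentiable ℝ f := hf.differentiable (by norm_num)
  have hfd1 : Differentiable ℝ (deriv f) := deriv_diffble hf
  have hg := lin_ode c (fun x => deriv f x + c * f x)
    (hfd1.add (hf1.const_mul c))
    (by
      intro x
      have h1 : HasDerivAt (fun x => deriv f x + c * f x)
          (deriv (deriv f) x + c * deriv f x) x :=
        ((hfd1 x).hasDerivAt).add (((hf1 x).hasDerivAt).const_mul c)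
      rw [h1.deriv, hode x]; ring)
  have hh := lin_ode (-c) (fun x => deriv f x - c * f x)
    (hfd1.sub (hf1.const_mul c))
    (by
      intro x
      have h1 : HasDerivAt (fun x => deriv f x - c * f x)
          (deriv (deriv f) x - c * deriv f x) x :=
        ((hfd1 x).hasDerivAt).sub (((hf1 x).hasDerivAt).const_mul c)
      rw [h1.deriv, hode x]; ring)
  intro x
  have h1 := hg x
  have h2 := hh x
  have hx : (2 * c) * f x = (deriv f 0 + c * f 0) * Real.exp (c * x)
      - (deriv f 0 - c * f 0) * Real.exp (-c * x) := by
    nlinarith [h1, h2]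
  have h2c : (2 * c) ≠ 0 := by simpa using hc
  field_simp
  rw [show -(c * x) = -c * x by ring]
  linarith [hx]

lemma tanh_aux (x : ℝ) (hx : 0 < x) : Real.sinh x < x * Real.cosh x := by
  have hG : ∀ t : ℝ, HasDerivAt (fun t => t * Real.cosh t - Real.sinh t)
      (t * Real.sinh t) t := by
    intro t
    have h1 : HasDerivAt (fun t : ℝ => t * Real.cosh t)
        (1 * Real.cosh t + t * Real.sinh t) t :=
      (hasDerivAt_id t).mul (Real.hasDerivAt_cosh t)
    have := h1.sub (Real.hasDerivAt_sinh t)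
    exact this.congr_deriv (by ring)
  have hmono : StrictMonoOn (fun t => t * Real.cosh t - Real.sinh t) (Set.Ici 0) := by
    apply strictMonoOn_of_deriv_pos (convex_Ici 0)
    · exact (Continuous.mul continuous_id Real.continuous_cosh).sub
        Real.continuous_sinh |>.continuousOn
    · intro t ht
      rw [interior_Ici] at ht
      rw [(hG t).deriv]
      exact mul_pos ht (Real.sinh_pos_iff.mpr ht)
  have := hmono (Set.self_mem_Ici) (Set.mem_Ici.mpr hx.le) hx
  simp at this
  linarith

lemma sinh_strict (d s : ℝ) (hd : 0 < d) (hds : d < s) :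
    s * Real.sinh d < d * Real.sinh s := by
  have hF : ∀ t : ℝ, HasDerivAt (fun t => d * Real.sinh t - t * Real.sinh d)
      (d * Real.cosh t - Real.sinh d) t := by
    intro t
    have h1 := (Real.hasDerivAt_sinh t).const_mul d
    have h2 : HasDerivAt (fun t : ℝ => t * Real.sinh d) (Real.sinh d) t := by
      simpa using (hasDerivAt_id t).mul_const (Real.sinh d)
    exact h1.sub h2
  have hmono : StrictMonoOn (fun t => d * Real.sinh t - t * Real.sinh d) (Set.Ici d) := by
    apply strictMonoOn_of_deriv_pos (convex_Ici d)
    · exact ((continuous_const.mul Real.continuous_sinh).sub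
        (continuous_id.mul continuous_const)).continuousOn
    · intro t ht
      rw [interior_Ici] at ht
      rw [(hF t).deriv]
      have h1 : Real.sinh d < d * Real.cosh d := tanh_aux d hd
      have ht' : d < t := ht
      have h2 : Real.cosh d ≤ Real.cosh t := by
        rw [Real.cosh_le_cosh]
        rw [abs_of_pos hd, abs_of_pos (hd.trans ht')]
        exact ht'.le
      nlinarith
  have := hmono (Set.self_mem_Ici) (Set.mem_Ici.mpr hds.le) hds
  simp only at this
  nlinarith

lemma root_uniq_aux (ε α k μ : ℝ) (hε : 0 < ε) (hk : 0 < k) (h : k < μ)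
    (h1 : k * Real.cosh (k * ε) = α * Real.sinh (k * ε))
    (h2 : μ * Real.cosh (μ * ε) = α * Real.sinh (μ * ε)) : False := by
  have hμ : 0 < μ := hk.trans h
  have hcross : μ * Real.cosh (μ * ε) * Real.sinh (k * ε)
      = k * Real.cosh (k * ε) * Real.sinh (μ * ε) := by
    rw [h2, h1]; ring
  have e1 : 2 * (Real.cosh (μ * ε) * Real.sinh (k * ε))
      = Real.sinh (μ * ε + k * ε) - Real.sinh (μ * ε - k * ε) := by
    rw [Real.sinh_add, Real.sinh_sub]; ring
  have e2 : 2 * (Real.cosh (k * ε) * Real.sinh (μ * ε))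
      = Real.sinh (μ * ε + k * ε) + Real.sinh (μ * ε - k * ε) := by
    rw [Real.sinh_add, Real.sinh_sub]; ring
  set S := Real.sinh (μ * ε + k * ε) with hS
  set D := Real.sinh (μ * ε - k * ε) with hD
  have key : (μ - k) * S = (μ + k) * D := by nlinarith [hcross, e1, e2]
  have hd0 : 0 < (μ - k) * ε := mul_pos (by linarith) hε
  have hds : (μ - k) * ε < (μ + k) * ε := by nlinarith
  have hstr := sinh_strict ((μ - k) * ε) ((μ + k) * ε) hd0 hds
  have hrw1 : μ * ε - k * ε = (μ - k) * ε := by ring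
  have hrw2 : μ * ε + k * ε = (μ + k) * ε := by ring
  rw [hrw1] at hD
  rw [hrw2] at hS
  rw [hS, hD] at key
  nlinarith [hstr, key, hε]

lemma root_uniq (ε α k μ : ℝ) (hε : 0 < ε) (hk : 0 < k) (hμ : 0 < μ)
    (h1 : k * Real.cosh (k * ε) = α * Real.sinh (k * ε))
    (h2 : μ * Real.cosh (μ * ε) = α * Real.sinh (μ * ε)) : μ = k := by
  rcases lt_trichotomy μ k with h | h | h
  · exact absurd (root_uniq_aux ε α μ k hε hμ h h2 h1) not_false
  · exact h
  · exact absurd (root_uniq_aux ε α k μ hε hk h h1 h2) not_false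

lemma root_exists (ε α : ℝ) (hε : 0 < ε) (hα : 4 / ε ≤ α) :
    ∃ k, 2 / ε ≤ k ∧ k ≤ α ∧ k * Real.cosh (k * ε) = α * Real.sinh (k * ε) := by
  set h : ℝ → ℝ := fun x => x * Real.cosh (x * ε) - α * Real.sinh (x * ε) with hh
  have hcont : ContinuousOn h (Set.Icc (2 / ε) α) := by
    apply Continuous.continuousOn
    fun_prop
  have hle : 2 / ε ≤ α := le_trans (by gcongr <;> norm_num) hα
  have hlo : h (2 / ε) ≤ 0 := by
    have h2ε : (2 / ε) * ε = 2 := by field_simp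
    have hE : (3 : ℝ) ≤ Real.exp 2 := by
      have := Real.add_one_le_exp (2 : ℝ); linarith
    have hE' : Real.exp (-2 : ℝ) ≤ 1 / 3 := by
      rw [Real.exp_neg, inv_le_comm₀ (Real.exp_pos 2) (by norm_num)]
      linarith
    have hch : Real.cosh 2 ≤ 2 * Real.sinh 2 := by
      rw [Real.cosh_eq, Real.sinh_eq]
      nlinarith [hE, hE']
    have hsinh2 : 0 < Real.sinh 2 := Real.sinh_pos_iff.mpr (by norm_num)
    simp only [hh, h2ε]
    have : α * Real.sinh 2 ≥ (4 / ε) * Real.sinh 2 := by nlinarith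
    have h4 : (4 / ε) * Real.sinh 2 = (2 / ε) * (2 * Real.sinh 2) := by ring
    nlinarith [hch, this, h4, div_pos (by norm_num : (0:ℝ) < 2) hε]
  have hhi : 0 ≤ h α := by
    have hα0 : 0 < α := lt_of_lt_of_le (by positivity) hα
    have := Real.cosh_sub_sinh (α * ε)
    simp only [hh]
    nlinarith [Real.exp_pos (-(α * ε))]
  have := intermediate_value_Icc hle hcont
  have h0 : (0 : ℝ) ∈ Set.Icc (h (2 / ε)) (h α) := ⟨hlo, hhi⟩
  obtain ⟨k, hk1, hk2⟩ := this h0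
  exact ⟨k, hk1.1, hk1.2, by simp only [hh] at hk2; linarith⟩

lemma integral_val (A B k ε : ℝ) (hk : k ≠ 0) :
    ∫ x in (0:ℝ)..ε, (A * Real.exp (k * x) + B * Real.exp (-(k * x))) ^ 2
      = A ^ 2 / (2 * k) * (Real.exp (2 * k * ε) - 1) + 2 * A * B * ε
        - B ^ 2 / (2 * k) * (Real.exp (-(2 * k * ε)) - 1) := by
  set F : ℝ → ℝ := fun x => A ^ 2 / (2 * k) * Real.exp (2 * k * x) + 2 * A * B * x
    - B ^ 2 / (2 * k) * Real.exp (-(2 * k * x)) with hF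
  have hder : ∀ x ∈ Set.uIcc (0:ℝ) ε,
      HasDerivAt F ((A * Real.exp (k * x) + B * Real.exp (-(k * x))) ^ 2) x := by
    intro x _
    have h1 : HasDerivAt (fun x : ℝ => Real.exp (2 * k * x))
        (Real.exp (2 * k * x) * (2 * k)) x := by
      simpa using ((hasDerivAt_id x).const_mul (2 * k)).exp
    have h2 : HasDerivAt (fun x : ℝ => Real.exp (-(2 * k * x)))
        (Real.exp (-(2 * k * x)) * (-(2 * k))) x := by
      simpa [neg_mul] using ((hasDerivAt_id x).const_mul (-(2 * k))).exp
    have h3 : HasDerivAt (fun x : ℝ => 2 * A * B * x) (2 * A * B) x := by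
      simpa using (hasDerivAt_id x).const_mul (2 * A * B)
    have := ((h1.const_mul (A ^ 2 / (2 * k))).add h3).sub (h2.const_mul (B ^ 2 / (2 * k)))
    refine this.congr_deriv ?_
    symm
    have e1 : Real.exp (k * x) * Real.exp (k * x) = Real.exp (2 * k * x) := by
      rw [← Real.exp_add]; ring_nf
    have e2 : Real.exp (-(k * x)) * Real.exp (-(k * x)) = Real.exp (-(2 * k * x)) := by
      rw [← Real.exp_add]; ring_nf
    have e3 : Real.exp (k * x) * Real.exp (-(k * x)) = 1 := by
      rw [← Real.exp_add]; simp
    field_simp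
    linear_combination (norm := ring_nf) A^2*e1 + B^2*e2 + 2*A*B*e3
  have hint : IntervalIntegrable
      (fun x => (A * Real.exp (k * x) + B * Real.exp (-(k * x))) ^ 2)
      MeasureTheory.volume 0 ε := by
    apply Continuous.intervalIntegrable; fun_prop
  have := intervalIntegral.integral_eq_sub_of_hasDerivAt hder hint
  rw [this]
  simp only [hF]
  simp [mul_zero, Real.exp_zero]
  ring

lemma exp_quad (t : ℝ) (ht : 0 ≤ t) : t ^ 2 / 4 ≤ Real.exp t := by
  have h := Real.add_one_le_exp (t / 2)
  rw [show t = t / 2 + t / 2 by ring, Real.exp_add]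
  nlinarith [h, ht]

lemma exp_four (t : ℝ) (ht : 2 ≤ t) : 4 ≤ Real.exp t := by
  have h1 : (2:ℝ) ≤ Real.exp 1 := by linarith [Real.add_one_le_exp (1:ℝ)]
  have h2 : (4:ℝ) ≤ Real.exp 2 := by
    rw [show (2:ℝ) = 1 + 1 by norm_num, Real.exp_add]
    nlinarith
  calc (4:ℝ) ≤ Real.exp 2 := h2
  _ ≤ Real.exp t := Real.exp_le_exp.mpr ht

lemma final_bound (ε α k f0 s c E E' : ℝ) (hε : 0 < ε) (hk0 : 0 < k)
    (ht2 : 2 ≤ k * ε) (hkeq : k * c = α * s) (hEE' : E * E' = 1)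
    (hsE : 2 * s = E - E') (hcE : 2 * c = E + E')
    (hspos : 0 < s) (hE'pos : 0 < E') (hElb : 4 ≤ E) (hEq : (k * ε) ^ 2 / 4 ≤ E)
    (hts : k * ε < s) (htc : s < k * ε * c) (hc2q : c ^ 2 = s ^ 2 + 1)
    (key : f0 ^ 2 * (s * c - k * ε) = 2 * k * s ^ 2) :
    |f0 ^ 2 - 2 * α| ≤ 256 / ε := by
  have hkε : 0 < k * ε := by linarith
  have hE'le : E' ≤ 1 := by
    have h := mul_le_mul_of_nonneg_right hElb hE'pos.le
    rw [hEE'] at h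
    linarith
  have hc2 : 2 ≤ c := by linarith
  have E1 : (f0 ^ 2 - 2 * α) * (s * (s * c - k * ε)) = 2 * k * ((k * ε) * c - s) := by
    linear_combination s * key + 2 * (s * c - k * ε) * hkeq + (-(2 * k * s)) * hc2q
  have hslb : (k * ε) ^ 2 / 16 ≤ s := by nlinarith [hsE, hEq, hElb, hE'le]
  have hP : 0 < s * (s * c - k * ε) := by
    nlinarith [hts, hspos, hc2, mul_pos hspos (by linarith : (0:ℝ) < c - 1)]
  have hN : 0 ≤ 2 * k * ((k * ε) * c - s) := by nlinarith [htc, hk0]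
  have hNP : 2 * k * ((k * ε) * c - s) ≤ 256 / ε * (s * (s * c - k * ε)) := by
    rw [div_mul_eq_mul_div, le_div_iff₀ hε]
    have h4 : 4 ≤ (k * ε) ^ 2 := by nlinarith [ht2]
    have h5 : (k * ε) ^ 2 / 16 * ((k * ε) ^ 2 / 16) ≤ s * s :=
      mul_le_mul hslb hslb (by positivity) hspos.le
    have hsq : 2 * (k * ε) ^ 2 ≤ 128 * s ^ 2 := by
      nlinarith [h5, mul_le_mul_of_nonneg_right h4 (sq_nonneg (k * ε))]
    have hrhs : s ^ 2 * c / 2 ≤ s * (s * c - k * ε) := by nlinarith [hts, hspos, hc2]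
    have hb1 : 2 * k * ((k * ε) * c - s) * ε ≤ 2 * (k * ε) ^ 2 * c := by
      nlinarith [mul_pos (mul_pos hk0 hspos) hε]
    have hb2 : 2 * (k * ε) ^ 2 * c ≤ 128 * s ^ 2 * c := by
      nlinarith [mul_le_mul_of_nonneg_right hsq (by linarith : (0:ℝ) ≤ c)]
    have hb3 : 128 * s ^ 2 * c ≤ 256 * (s * (s * c - k * ε)) := by linarith [hrhs]
    linarith [hb1, hb2, hb3]
  have hdiveq : f0 ^ 2 - 2 * α = 2 * k * ((k * ε) * c - s) / (s * (s * c - k * ε)) := by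
    rw [eq_div_iff hP.ne']
    exact E1
  rw [hdiveq, abs_of_nonneg (div_nonneg hN hP.le)]
  rw [div_le_iff₀ hP]
  exact hNP

/-- `lam` is an eigenvalue of the Robin–Dirichlet Laplacian `S` on `(0, ε)` with Robin
parameter `−α` at `0` (boundary conditions `f'(0) + α f(0) = 0`, `f(ε) = 0`). -/
def IsRDEigen (ε α lam : ℝ) : Prop :=
  ∃ f : ℝ → ℝ, ContDiff ℝ 2 f ∧ (∃ x ∈ Set.Icc 0 ε, f x ≠ 0) ∧
    (∀ x, deriv (deriv f) x = - lam * f x) ∧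
    deriv f 0 + α * f 0 = 0 ∧ f ε = 0

lemma eigen_mem (ε α k : ℝ) (hε : 0 < ε) (hk : 0 < k)
    (heq : k * Real.cosh (k * ε) = α * Real.sinh (k * ε)) :
    IsRDEigen ε α (-k ^ 2) := by
  set φ : ℝ → ℝ := fun x => Real.sinh (k * (ε - x)) with hφ
  have hd1 : ∀ x, HasDerivAt φ (-(k * Real.cosh (k * (ε - x)))) x := by
    intro x
    have h0 : HasDerivAt (fun x : ℝ => k * (ε - x)) (k * (-1)) x :=
      ((hasDerivAt_id x).const_sub ε).const_mul k
    have := h0.sinh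
    convert this using 1; ring
  have hderiv1 : deriv φ = fun x => -(k * Real.cosh (k * (ε - x))) :=
    funext fun x => (hd1 x).deriv
  have hd2 : ∀ x, HasDerivAt (deriv φ) (k ^ 2 * Real.sinh (k * (ε - x))) x := by
    intro x
    rw [hderiv1]
    have h0 : HasDerivAt (fun x : ℝ => k * (ε - x)) (k * (-1)) x :=
      ((hasDerivAt_id x).const_sub ε).const_mul k
    have := (h0.cosh.const_mul k).neg
    exact this.congr_deriv (by ring)
  refine ⟨φ, ?_, ⟨0, ⟨le_rfl, hε.le⟩, ?_⟩, ?_, ?_, ?_⟩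
  · exact Real.contDiff_sinh.comp (contDiff_const.mul (contDiff_const.sub contDiff_id))
  · simp only [hφ, sub_zero]
    exact (Real.sinh_pos_iff.mpr (by positivity)).ne'
  · intro x
    rw [(hd2 x).deriv]
    simp only [hφ]; ring
  · rw [hderiv1]
    simp only [hφ, sub_zero]
    linarith [heq]
  · simp [hφ]

/-- The `L²`-normalized eigenfunction `f` associated with the first eigenvalue
`E₁(S) = inf` of the eigenvalue set satisfies `|f(0)|² = 2α + O(1)` as `α → +∞`. -/
theorem stmt_6 (ε : ℝ) (hε : 0 < ε) :
    ∃ α₀ K : ℝ, 0 < α₀ ∧ 0 < K ∧ ∀ α ≥ α₀, ∀ f : ℝ → ℝ,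
      ContDiff ℝ 2 f →
      (∀ x, deriv (deriv f) x = - (sInf {lam | IsRDEigen ε α lam}) * f x) →
      deriv f 0 + α * f 0 = 0 → f ε = 0 →
      (∫ x in (0:ℝ)..ε, (f x) ^ 2) = 1 →
      |(f 0) ^ 2 - 2 * α| ≤ K := by
  refine ⟨4 / ε, 256 / ε, by positivity, by positivity, ?_⟩
  intro α hα f hf hode hrobin hfε hnorm
  obtain ⟨k, hk1, hk2, hkeq⟩ := root_exists ε α hε hα
  have hk0 : 0 < k := lt_of_lt_of_le (by positivity) hk1
  have hmem : (-k ^ 2) ∈ {lam | IsRDEigen ε α lam} := eigen_mem ε α k hε hk0 hkeq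
  by_cases hbdd : BddBelow {lam | IsRDEigen ε α lam}
  swap
  · -- degenerate case: sInf = 0, f is linear, contradiction with normalization
    exfalso
    have hl0 : sInf {lam | IsRDEigen ε α lam} = 0 := Real.sInf_of_not_bddBelow hbdd
    have hode0 : ∀ x, deriv (deriv f) x = 0 := by
      intro x; rw [hode x, hl0]; ring
    have hf1 : Differentiable ℝ f := hf.differentiable (by norm_num)
    have hfd1 : Differentiable ℝ (deriv f) := deriv_diffble hf
    have hb : ∀ x, deriv f x = deriv f 0 := fun x =>
      is_const_of_deriv_eq_zero hfd1 hode0 x 0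
    have hlin : ∀ x, f x = f 0 + deriv f 0 * x := by
      intro x
      have hv : ∀ y, HasDerivAt (fun y => f y - deriv f 0 * y) 0 y := by
        intro y
        have h := (hf1 y).hasDerivAt.sub ((hasDerivAt_id y).const_mul (deriv f 0))
        exact h.congr_deriv (by simp [hb y])
      have := is_const_of_deriv_eq_zero (fun y => (hv y).differentiableAt)
        (fun y => (hv y).deriv) x 0
      simp only [mul_zero, sub_zero] at this
      linarith
    have h1 : f 0 + deriv f 0 * ε = 0 := by rw [← hlin ε]; exact hfε
    have h2 : deriv f 0 = -α * f 0 := by linarith [hrobin]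
    have hαε : 4 ≤ α * ε := by
      have h3 : 4 / ε ≤ α := hα
      have := (div_le_iff₀ hε).mp h3
      linarith
    have hf00 : f 0 = 0 := by nlinarith [h1, h2]
    have hfz : ∀ x, f x = 0 := by intro x; rw [hlin x, hf00, h2, hf00]; ring
    simp only [hfz] at hnorm
    norm_num at hnorm
  · -- main case
    have hle : sInf {lam | IsRDEigen ε α lam} ≤ -k ^ 2 := csInf_le hbdd hmem
    have hlneg : 0 < -sInf {lam | IsRDEigen ε α lam} := by nlinarith
    set μ := Real.sqrt (-sInf {lam | IsRDEigen ε α lam}) with hμdef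
    have hμ0 : 0 < μ := Real.sqrt_pos.mpr hlneg
    have hμsq : μ ^ 2 = -sInf {lam | IsRDEigen ε α lam} := Real.sq_sqrt hlneg.le
    have hode2 : ∀ x, deriv (deriv f) x = μ ^ 2 * f x := by
      intro x; rw [hode x, hμsq]
    have hrep := second_ode μ hμ0.ne' f hf hode2
    have hba : deriv f 0 = -(α * f 0) := by linarith [hrobin]
    have ha0 : f 0 ≠ 0 := by
      intro h0
      have hfz : ∀ x, f x = 0 := by
        intro x; rw [hrep x, hba, h0]; ring
      simp only [hfz] at hnorm
      norm_num at hnorm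
    -- determinant condition: μ cosh(με) = α sinh(με)
    have hdet : μ * Real.cosh (μ * ε) = α * Real.sinh (μ * ε) := by
      have h1 := hrep ε
      rw [hfε, hba] at h1
      have h3 : f 0 * ((μ - α) * Real.exp (μ * ε) + (μ + α) * Real.exp (-(μ * ε))) = 0 := by
        field_simp at h1
        linear_combination -h1
      have h4 : (μ - α) * Real.exp (μ * ε) + (μ + α) * Real.exp (-(μ * ε)) = 0 :=
        (mul_eq_zero.mp h3).resolve_left ha0
      rw [Real.cosh_eq, Real.sinh_eq]
      linarith [h4]
    have hμk : μ = k := root_uniq ε α k μ hε hk0 hμ0 hkeq hdet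
    rw [hμk] at hrep
    -- rewrite the normalization integral
    have hnorm2 : (∫ x in (0:ℝ)..ε,
        ((deriv f 0 + k * f 0) / (2 * k) * Real.exp (k * x)
          + (k * f 0 - deriv f 0) / (2 * k) * Real.exp (-(k * x))) ^ 2) = 1 := by
      rw [← hnorm]
      apply intervalIntegral.integral_congr
      intro x _
      simp only
      rw [hrep x]
    rw [integral_val _ _ k ε hk0.ne'] at hnorm2
    -- notation
    set E := Real.exp (k * ε) with hE
    set E' := Real.exp (-(k * ε)) with hE'
    set s := Real.sinh (k * ε) with hs
    set c := Real.cosh (k * ε) with hc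
    have hkε : 0 < k * ε := mul_pos hk0 hε
    have hEE' : E * E' = 1 := by rw [hE, hE', ← Real.exp_add]; simp
    have hE2 : Real.exp (2 * k * ε) = E ^ 2 := by
      rw [hE, show 2 * k * ε = k * ε + k * ε by ring, Real.exp_add, sq]
    have hE2' : Real.exp (-(2 * k * ε)) = E' ^ 2 := by
      rw [hE', show -(2 * k * ε) = -(k * ε) + -(k * ε) by ring, Real.exp_add, sq]
    have hsE : 2 * s = E - E' := by rw [hs, hE, hE', Real.sinh_eq]; ring
    have hcE : 2 * c = E + E' := by rw [hc, hE, hE', Real.cosh_eq]; ring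
    have hspos : 0 < s := by rw [hs]; exact Real.sinh_pos_iff.mpr hkε
    have hs0 : s ≠ 0 := hspos.ne'
    have hAe : (-(α * f 0) + k * f 0) * s = -(k * f 0 * E') := by
      linear_combination (f 0) * hkeq + (k * f 0 / 2) * hsE - (k * f 0 / 2) * hcE
    have hBe : (k * f 0 - -(α * f 0)) * s = k * f 0 * E := by
      linear_combination (-(f 0)) * hkeq + (k * f 0 / 2) * hsE + (k * f 0 / 2) * hcE
    have hAB : (deriv f 0 + k * f 0) / (2 * k) = -(f 0 * E') / (2 * s) := by
      rw [hba, div_eq_div_iff (by positivity) (by positivity)]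
      linear_combination 2 * hAe
    have hBB : (k * f 0 - deriv f 0) / (2 * k) = f 0 * E / (2 * s) := by
      rw [hba, div_eq_div_iff (by positivity) (by positivity)]
      linear_combination 2 * hBe
    rw [hE2, hE2', hAB, hBB] at hnorm2
    have hsc : E ^ 2 - E' ^ 2 = 4 * (s * c) := by
      linear_combination (-(2 * c)) * hsE + (-(E - E')) * hcE
    have key : (f 0) ^ 2 * (s * c - k * ε) = 2 * k * s ^ 2 := by
      field_simp at hnorm2
      have key' : 128 * k * s ^ 4 * ((f 0) ^ 2 * (s * c - k * ε))
          = 128 * k * s ^ 4 * (2 * k * s ^ 2) := by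
        linear_combination (32 * k * s ^ 4) * hnorm2 + (-(32 * k * s ^ 4 * (f 0) ^ 2)) * hsc
          + (128 * k ^ 2 * s ^ 4 * ε * (f 0) ^ 2) * hEE'
      exact mul_left_cancel₀ (by positivity) key'
    clear hnorm2 hAB hBB hAe hBe hrep hode hode2 hnorm
    have hc2q : c ^ 2 = s ^ 2 + 1 := by rw [hc, hs]; exact Real.cosh_sq _
    have ht2 : 2 ≤ k * ε := by
      have := (div_le_iff₀ hε).mp hk1
      linarith
    have hElb : 4 ≤ E := by rw [hE]; exact exp_four _ ht2
    have hE'pos : 0 < E' := Real.exp_pos _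
    have hEq : (k * ε) ^ 2 / 4 ≤ E := by rw [hE]; exact exp_quad _ hkε.le
    have hts : k * ε < s := by rw [hs]; exact Real.self_lt_sinh_iff.mpr hkε
    have htc : s < (k * ε) * c := by rw [hs, hc]; exact tanh_aux _ hkε
    exact final_bound ε α k (f 0) s c E E' hε hk0 ht2 hkeq hEE' hsE hcE hspos
      hE'pos hElb hEq hts htc hc2q key
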